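/- Let B = Borel(m) be a principal Borel ideal with m = x_{i_1}⋯x_{i_s} in weakly increasing factorization, and for 0 ≤ d ≤ s−1 let c_d be the number of weakly increasing sequences (a_1,…,a_d) with a_j ≤ i_j for all j (so c_0 = 1). Then the generating function counting monomials NOT in B satisfies: Σ_{u monomial, u ∉ Borel(m)} t^{deg u} = Σ_{d=0}^{s−1} c_d · t^d / (1−t)^{n−i_{d+1}} as formal power series. Equivalently, for each degree e, the number of degree-e monomials in x_1,…,x_n not in Borel(m) equals Σ_{d=0}^{min(e,s−1)} c_d · binom(e − d + n − i_{d+1} − 1, n − i_{d+1} − 1). -/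

import Mathlib

open List

lemma sorted_getElem_le {l : List ℕ} (h : l.Pairwise (· ≤ ·)) {i j : ℕ}
    (hij : i ≤ j) (hj : j < l.length) : l[i]'(lt_of_le_of_lt hij hj) ≤ l[j] := by
  rcases eq_or_lt_of_le hij with rfl | hlt
  · exact le_rfl
  · exact List.pairwise_iff_get.1 h ⟨i, lt_of_le_of_lt hij hj⟩ ⟨j, hj⟩ hlt

lemma countP_le_iff {l : List ℕ} (hs : l.Pairwise (· ≤ ·)) {j v : ℕ} (hj : j < l.length) :
    l[j] ≤ v ↔ j + 1 ≤ l.countP (fun x => decide (x ≤ v)) := by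
  constructor
  · intro h
    have h1 : (l.take (j+1)).countP (fun x => decide (x ≤ v)) = (l.take (j+1)).length := by
      rw [List.countP_eq_length]
      intro a ha
      rcases List.mem_iff_getElem.1 ha with ⟨i, hi, rfl⟩
      have hi2 : i ≤ j := by simp [List.length_take] at hi; omega
      simp only [List.getElem_take]
      exact decide_eq_true ((sorted_getElem_le hs hi2 hj).trans h)
    have h2 : l.countP (fun x => decide (x ≤ v)) =
        (l.take (j+1)).countP (fun x => decide (x ≤ v))
          + (l.drop (j+1)).countP (fun x => decide (x ≤ v)) := by
      rw [← List.countP_append, List.take_append_drop]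
    have h3 : (l.take (j+1)).length = j + 1 := by simp [List.length_take]; omega
    omega
  · intro h
    by_contra hv
    push_neg at hv
    have h0 : (l.drop j).countP (fun x => decide (x ≤ v)) = 0 := by
      rw [List.countP_eq_zero]
      intro a ha
      rcases List.mem_iff_getElem.1 ha with ⟨i, hi, rfl⟩
      simp only [List.getElem_drop, decide_eq_true_eq]
      have hji : j + i < l.length := by simp [List.length_drop] at hi; omega
      have : l[j] ≤ l[j+i] := sorted_getElem_le hs (Nat.le_add_right j i) hji
      omega
    have h2 : l.countP (fun x => decide (x ≤ v)) =
        (l.take j).countP (fun x => decide (x ≤ v))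
          + (l.drop j).countP (fun x => decide (x ≤ v)) := by
      rw [← List.countP_append, List.take_append_drop]
    have h3 := List.countP_le_length (p := fun x => decide (x ≤ v)) (l := l.take j)
    simp only [List.length_take] at h3
    omega

lemma finite_bounded_lists (k n : ℕ) :
    {l : List ℕ | l.length = k ∧ ∀ x ∈ l, x ≤ n}.Finite := by
  induction k with
  | zero =>
    apply Set.Finite.subset (Set.finite_singleton ([] : List ℕ))
    rintro l ⟨hl, -⟩
    simp [List.length_eq_zero_iff.1 hl]
  | succ k ih =>
    apply Set.Finite.subset (((Set.finite_Iic n).prod ih).image (fun p => p.1 :: p.2))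
    rintro l ⟨hl, hb⟩
    cases l with
    | nil => simp at hl
    | cons a t =>
      refine ⟨(a, t), ⟨hb a (by simp), by simpa using hl, fun x hx => hb x (by simp [hx])⟩, rfl⟩

lemma ncard_prod' {α β : Type*} (s : Set α) (t : Set β) :
    (s ×ˢ t).ncard = s.ncard * t.ncard := by
  rw [← Nat.card_coe_set_eq, ← Nat.card_coe_set_eq, ← Nat.card_coe_set_eq,
      Nat.card_congr (Equiv.Set.prod s t), Nat.card_prod]

lemma ncard_biUnion' {ι α : Type*} (s : Finset ι) (A : ι → Set α)
    (hfin : ∀ i ∈ s, (A i).Finite)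
    (hdisj : ∀ i ∈ s, ∀ j ∈ s, i ≠ j → Disjoint (A i) (A j)) :
    (⋃ i ∈ s, A i).ncard = ∑ i ∈ s, (A i).ncard := by
  classical
  induction s using Finset.induction with
  | empty => simp
  | @insert a s hnotmem ih =>
    rw [Finset.set_biUnion_insert, Finset.sum_insert hnotmem,
      Set.ncard_union_eq ?_ (hfin a (by simp)) ?_,
      ih (fun i hi => hfin i (by simp [hi])) (fun i hi j hj => hdisj i (by simp [hi]) j (by simp [hj]))]
    · rw [Set.disjoint_iUnion_right]
      intro i
      rw [Set.disjoint_iUnion_right]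
      intro hi
      exact hdisj a (by simp) i (by simp [hi]) (by rintro rfl; exact hnotmem hi)
    · exact Set.Finite.biUnion s.finite_toSet
        (fun i hi => hfin i (by simp only [Finset.mem_coe] at hi; simp [hi]))

lemma ncard_sorted_bounded (k m : ℕ) :
    Set.ncard {l : List ℕ | l.length = k ∧ l.Chain' (· ≤ ·) ∧ ∀ x ∈ l, 1 ≤ x ∧ x ≤ m}
      = Nat.multichoose m k := by
  induction k generalizing m with
  | zero =>
    rw [Nat.multichoose_zero_right]
    have hset : {l : List ℕ | l.length = 0 ∧ l.Chain' (· ≤ ·) ∧ ∀ x ∈ l, 1 ≤ x ∧ x ≤ m}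
        = {([] : List ℕ)} := by
      ext l
      constructor
      · rintro ⟨h0, -, -⟩
        simpa using List.length_eq_zero_iff.1 h0
      · rintro rfl
        exact ⟨rfl, List.isChain_nil, by simp⟩
    rw [hset, Set.ncard_singleton]
  | succ k ih =>
    induction m with
    | zero =>
      rw [Nat.multichoose_zero_succ]
      have hset : {l : List ℕ | l.length = k + 1 ∧ l.Chain' (· ≤ ·) ∧ ∀ x ∈ l, 1 ≤ x ∧ x ≤ 0}
          = ∅ := by
        ext l
        simp only [Set.mem_setOf_eq, Set.mem_empty_iff_false, iff_false]
        rintro ⟨h0, -, hb⟩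
        cases l with
        | nil => simp at h0
        | cons a t => have := hb a (by simp); omega
      rw [hset, Set.ncard_empty]
    | succ m ihm =>
      have hset : {l : List ℕ | l.length = k + 1 ∧ l.Chain' (· ≤ ·) ∧ ∀ x ∈ l, 1 ≤ x ∧ x ≤ m + 1}
          = ((fun t => 1 :: t) ''
              {l : List ℕ | l.length = k ∧ l.Chain' (· ≤ ·) ∧ ∀ x ∈ l, 1 ≤ x ∧ x ≤ m + 1})
            ∪ ((List.map (· + 1)) ''
              {l : List ℕ | l.length = k + 1 ∧ l.Chain' (· ≤ ·) ∧ ∀ x ∈ l, 1 ≤ x ∧ x ≤ m}) := by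
        ext l
        constructor
        · rintro ⟨hlen, hch, hbd⟩
          cases l with
          | nil => simp at hlen
          | cons a t =>
            rcases eq_or_lt_of_le (hbd a (by simp)).1 with ha | ha
            · left
              exact ⟨t, ⟨by simpa using hlen, hch.tail,
                fun x hx => hbd x (List.mem_cons_of_mem _ hx)⟩, by rw [← ha]⟩
            · right
              have h2 : ∀ x ∈ a :: t, 2 ≤ x := by
                intro x hx
                rcases List.mem_cons.1 hx with rfl | hx
                · omega
                · have hax : a ≤ x :=
                    (List.pairwise_cons.1 (List.isChain_iff_pairwise.1 hch)).1 x hx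
                  omega
              refine ⟨List.map (· - 1) (a :: t), ⟨by simpa using hlen, ?_, ?_⟩, ?_⟩
              · exact (List.isChain_map _).2 (hch.imp fun x y hxy => by omega)
              · intro x hx
                rcases List.mem_map.1 hx with ⟨y, hy, rfl⟩
                have := h2 y hy
                have := (hbd y hy).2
                omega
              · rw [List.map_map]
                have : ∀ y ∈ a :: t, ((· + 1) ∘ (· - 1)) y = id y := by
                  intro y hy
                  have := h2 y hy
                  simp only [Function.comp_apply, id_eq]
                  omega
                rw [List.map_congr_left this, List.map_id]
        · rintro (⟨t, ⟨ht1, ht2, ht3⟩, rfl⟩ | ⟨u, ⟨hu1, hu2, hu3⟩, rfl⟩)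
          · refine ⟨by simpa using ht1,
              List.isChain_cons.2 ⟨fun y hy => (ht3 y (List.mem_of_mem_head? hy)).1, ht2⟩, ?_⟩
            intro x hx
            rcases List.mem_cons.1 hx with rfl | hx
            · omega
            · exact ⟨(ht3 x hx).1, (ht3 x hx).2⟩
          · refine ⟨by simpa using hu1,
              (List.isChain_map _).2 (hu2.imp fun x y hxy => by omega), ?_⟩
            intro x hx
            rcases List.mem_map.1 hx with ⟨y, hy, rfl⟩
            have := (hu3 y hy).1
            have := (hu3 y hy).2
            omega
      have hdisj : Disjoint
          ((fun t => 1 :: t) ''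
              {l : List ℕ | l.length = k ∧ l.Chain' (· ≤ ·) ∧ ∀ x ∈ l, 1 ≤ x ∧ x ≤ m + 1})
          ((List.map (· + 1)) ''
              {l : List ℕ | l.length = k + 1 ∧ l.Chain' (· ≤ ·) ∧ ∀ x ∈ l, 1 ≤ x ∧ x ≤ m}) := by
        rw [Set.disjoint_left]
        rintro l ⟨t, -, rfl⟩ ⟨u, ⟨hu1, -, hu3⟩, hu⟩
        cases u with
        | nil => simp at hu1
        | cons b u' =>
          simp only [List.map_cons] at hu
          have hb1 : (hu3 b (by simp)).1 = (hu3 b (by simp)).1 := rfl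
          have := (hu3 b (by simp)).1
          have : b + 1 = 1 := by
            have := congrArg List.head? hu
            simpa using this.symm
          omega
      have hfin1 : ((fun t => 1 :: t) ''
          {l : List ℕ | l.length = k ∧ l.Chain' (· ≤ ·) ∧ ∀ x ∈ l, 1 ≤ x ∧ x ≤ m + 1}).Finite := by
        apply Set.Finite.image
        exact (finite_bounded_lists k (m+1)).subset
          (fun l ⟨h1, h2, h3⟩ => ⟨h1, fun x hx => (h3 x hx).2⟩)
      have hfin2 : ((List.map (· + 1)) ''
          {l : List ℕ | l.length = k + 1 ∧ l.Chain' (· ≤ ·) ∧ ∀ x ∈ l, 1 ≤ x ∧ x ≤ m}).Finite := by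
        apply Set.Finite.image
        exact (finite_bounded_lists (k+1) m).subset
          (fun l ⟨h1, h2, h3⟩ => ⟨h1, fun x hx => (h3 x hx).2⟩)
      rw [hset, Set.ncard_union_eq hdisj hfin1 hfin2,
        Set.ncard_image_of_injOn (fun x _ y _ h => by injection h),
        Set.ncard_image_of_injOn
          ((List.map_injective_iff.2 (fun x y h => by omega)).injOn),
        ih (m+1), ihm, Nat.multichoose_succ_succ]
      omega

lemma ncard_sorted_interval (k a n : ℕ) (h : a ≤ n) :
    Set.ncard {l : List ℕ | l.length = k ∧ l.Chain' (· ≤ ·) ∧ ∀ x ∈ l, a < x ∧ x ≤ n}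
      = Nat.multichoose (n - a) k := by
  rw [← ncard_sorted_bounded k (n - a)]
  have himg : {l : List ℕ | l.length = k ∧ l.Chain' (· ≤ ·) ∧ ∀ x ∈ l, a < x ∧ x ≤ n}
      = (List.map (· + a)) ''
        {l : List ℕ | l.length = k ∧ l.Chain' (· ≤ ·) ∧ ∀ x ∈ l, 1 ≤ x ∧ x ≤ n - a} := by
    ext l
    constructor
    · rintro ⟨hlen, hch, hbd⟩
      refine ⟨List.map (· - a) l, ⟨by simpa using hlen,
        (List.isChain_map _).2 (hch.imp fun x y hxy => by omega), ?_⟩, ?_⟩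
      · intro x hx
        rcases List.mem_map.1 hx with ⟨y, hy, rfl⟩
        have := (hbd y hy).1
        have := (hbd y hy).2
        omega
      · rw [List.map_map]
        have : ∀ y ∈ l, ((· + a) ∘ (· - a)) y = id y := by
          intro y hy
          have := (hbd y hy).1
          simp only [Function.comp_apply, id_eq]
          omega
        rw [List.map_congr_left this, List.map_id]
    · rintro ⟨u, ⟨hu1, hu2, hu3⟩, rfl⟩
      refine ⟨by simpa using hu1,
        (List.isChain_map _).2 (hu2.imp fun x y hxy => by omega), ?_⟩
      intro x hx
      rcases List.mem_map.1 hx with ⟨y, hy, rfl⟩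
      have := (hu3 y hy).1
      have := (hu3 y hy).2
      omega
  rw [himg, Set.ncard_image_of_injOn
    ((List.map_injective_iff.2 (fun x y hxy => by omega)).injOn)]

/-- `c I d`: the number of weakly increasing sequences `(a_1,…,a_d)` of
positive integers with `a_j ≤ i_j` for all `j` (the degree-`d` minimal
generators of the `d`-truncation of `Borel(m)`, where `I` is the weakly
increasing factorization of `m`).  Note `c I 0 = 1`. -/
noncomputable def c (I : List ℕ) (d : ℕ) : ℕ :=
  Set.ncard {l : List ℕ | l.length = d ∧ l.Chain' (· ≤ ·) ∧
    ∀ t < d, 1 ≤ l.getD t 0 ∧ l.getD t 0 ≤ I.getD t 0}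

/-- Hilbert function of `S/Borel(m)`: the number of degree-`e` monomials in
`x_1,…,x_n` not in `Borel(m)` (a monomial is in `Borel(m)` iff for each
`j ≤ s` it has at least `j` entries `≤ i_j`) equals
`Σ_{d=0}^{min(e,s-1)} c_d · binom(e-d+n-i_{d+1}-1, n-i_{d+1}-1)`, where when
`n = i_{d+1}` the `d`-th summand contributes `c_d` exactly in degree `e = d`. -/
theorem hilbert_function_principal_borel (n : ℕ) (I : List ℕ)
    (hI : I.Chain' (· ≤ ·)) (hpos : ∀ x ∈ I, 1 ≤ x ∧ x ≤ n) (hne : I ≠ [])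
    (e : ℕ) :
    Set.ncard {l : List ℕ | l.length = e ∧ l.Chain' (· ≤ ·) ∧
      (∀ x ∈ l, 1 ≤ x ∧ x ≤ n) ∧
      ¬ (∀ j < I.length, j + 1 ≤ l.countP (fun x => decide (x ≤ I.getD j 0)))} =
    ∑ d ∈ Finset.range (min e (I.length - 1) + 1),
      c I d * (if I.getD d 0 = n then (if e = d then 1 else 0)
               else Nat.choose (e - d + (n - I.getD d 0) - 1) ((n - I.getD d 0) - 1)) := by
  classical
  have hs : 1 ≤ I.length := List.length_pos_iff.2 hne
  set D := min e (I.length - 1) with hD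
  have hDe : D ≤ e := min_le_left _ _
  have hDs : D < I.length := by omega
  have hIp : I.Pairwise (· ≤ ·) := List.isChain_iff_pairwise.1 hI
  set A : ℕ → Set (List ℕ) := fun d => {l : List ℕ | l.length = e ∧ l.Chain' (· ≤ ·) ∧
    (∀ x ∈ l, 1 ≤ x ∧ x ≤ n) ∧ (∀ j < d, l.getD j 0 ≤ I.getD j 0) ∧
    (d < e → I.getD d 0 < l.getD d 0)} with hA
  have hAmem : ∀ d l, l ∈ A d ↔ (l.length = e ∧ l.Chain' (· ≤ ·) ∧
      (∀ x ∈ l, 1 ≤ x ∧ x ≤ n) ∧ (∀ j < d, l.getD j 0 ≤ I.getD j 0) ∧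
      (d < e → I.getD d 0 < l.getD d 0)) := fun d l => Iff.rfl
  -- Step 1 : cover
  have hcover : {l : List ℕ | l.length = e ∧ l.Chain' (· ≤ ·) ∧
      (∀ x ∈ l, 1 ≤ x ∧ x ≤ n) ∧
      ¬ (∀ j < I.length, j + 1 ≤ l.countP (fun x => decide (x ≤ I.getD j 0)))}
      = ⋃ d ∈ Finset.range (D + 1), A d := by
    ext l
    simp only [Set.mem_setOf_eq, Set.mem_iUnion, Finset.mem_range, exists_prop]
    constructor
    · rintro ⟨hlen, hch, hbd, hnot⟩
      push_neg at hnot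
      obtain ⟨j₀, hj₀s, hj₀⟩ := hnot
      have hl := List.isChain_iff_pairwise.1 hch
      have hex : ∃ j, l.countP (fun x => decide (x ≤ I.getD j 0)) ≤ j :=
        ⟨e, hlen ▸ List.countP_le_length⟩
      have hdspec := Nat.find_spec hex
      have hdj₀ : Nat.find hex ≤ j₀ := Nat.find_min' hex (by omega)
      have hde : Nat.find hex ≤ e :=
        Nat.find_min' hex (hlen ▸ List.countP_le_length)
      refine ⟨Nat.find hex, by omega, (hAmem _ _).2 ⟨hlen, hch, hbd, ?_, ?_⟩⟩
      · intro j hj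
        have hmin := Nat.find_min hex hj
        push_neg at hmin
        have hjl : j < l.length := by omega
        have hgj := (countP_le_iff hl hjl (v := I.getD j 0)).2 (by omega)
        rwa [List.getD_eq_getElem l 0 hjl]
      · intro hdlt
        have hdl : Nat.find hex < l.length := by omega
        rw [List.getD_eq_getElem l 0 hdl]
        by_contra hcon
        push_neg at hcon
        have := (countP_le_iff hl hdl).1 hcon
        omega
    · rintro ⟨d, hdD, hmem⟩
      obtain ⟨hlen, hch, hbd, h4, h5⟩ := (hAmem _ _).1 hmem
      refine ⟨hlen, hch, hbd, ?_⟩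
      intro hall
      have hds : d < I.length := by omega
      have hcall := hall d hds
      rcases lt_or_eq_of_le (show d ≤ e by omega) with hdlt | hdeq
      · have hl := List.isChain_iff_pairwise.1 hch
        have hdl : d < l.length := by omega
        have hle := (countP_le_iff hl hdl).2 hcall
        have h5' := h5 hdlt
        rw [List.getD_eq_getElem l 0 hdl] at h5'
        omega
      · have hcnt := List.countP_le_length (p := fun x => decide (x ≤ I.getD d 0)) (l := l)
        omega
  -- Step 2 : disjointness and sum
  have hkey : ∀ d d', d < d' → d' < D + 1 → Disjoint (A d) (A d') := by
    intro d d' hdd' hd'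
    rw [Set.disjoint_left]
    intro l hl1 hl2
    obtain ⟨hlen, hch, hbd, h4, h5⟩ := (hAmem _ _).1 hl1
    obtain ⟨-, -, -, h4', -⟩ := (hAmem _ _).1 hl2
    have hde : d < e := by omega
    have := h5 hde
    have := h4' d hdd'
    omega
  rw [hcover, ncard_biUnion' _ _
    (fun d _ => (finite_bounded_lists e n).subset
      (fun l hl => ⟨((hAmem d l).1 hl).1, fun x hx => (((hAmem d l).1 hl).2.2.1 x hx).2⟩))
    (fun i hi j hj hij => by
      rcases lt_or_gt_of_ne hij with h | h
      · exact hkey i j h (Finset.mem_range.1 hj)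
      · exact (hkey j i h (Finset.mem_range.1 hi)).symm)]
  -- Step 3 : per-degree count
  apply Finset.sum_congr rfl
  intro d hd
  have hdD : d ≤ D := by have := Finset.mem_range.1 hd; omega
  have hds : d < I.length := by omega
  have hdele : d ≤ e := by omega
  have has : I.getD d 0 = I[d] := List.getD_eq_getElem I 0 hds
  have ha1 : 1 ≤ I.getD d 0 ∧ I.getD d 0 ≤ n := has ▸ hpos _ (List.getElem_mem hds)
  have himg : A d = (fun p : List ℕ × List ℕ => p.1 ++ p.2) ''
      (({l : List ℕ | l.length = d ∧ l.Chain' (· ≤ ·) ∧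
          ∀ t < d, 1 ≤ l.getD t 0 ∧ l.getD t 0 ≤ I.getD t 0}) ×ˢ
       ({l : List ℕ | l.length = e - d ∧ l.Chain' (· ≤ ·) ∧
          ∀ x ∈ l, I.getD d 0 < x ∧ x ≤ n})) := by
    ext l
    constructor
    · intro hl
      obtain ⟨hlen, hch, hbd, h4, h5⟩ := (hAmem _ _).1 hl
      have hpw := List.isChain_iff_pairwise.1 hch
      refine ⟨(l.take d, l.drop d), ⟨⟨?_, ?_, ?_⟩, ⟨?_, ?_, ?_⟩⟩, List.take_append_drop d l⟩
      · simp only [List.length_take]; omega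
      · exact List.isChain_iff_pairwise.2 (List.Pairwise.sublist (List.take_sublist d l) hpw)
      · intro t ht
        have htl : t < l.length := by omega
        have htake : t < (l.take d).length := by simp only [List.length_take]; omega
        rw [List.getD_eq_getElem _ 0 htake, List.getElem_take]
        refine ⟨(hbd _ (List.getElem_mem htl)).1, ?_⟩
        have h4t := h4 t ht
        rwa [List.getD_eq_getElem l 0 htl] at h4t
      · simp only [List.length_drop]; omega
      · exact List.isChain_iff_pairwise.2 (List.Pairwise.sublist (List.drop_sublist d l) hpw)
      · intro x hx
        rcases List.mem_iff_getElem.1 hx with ⟨i, hi, rfl⟩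
        have hdi : d + i < l.length := by simp only [List.length_drop] at hi; omega
        rw [List.getElem_drop]
        refine ⟨?_, (hbd _ (List.getElem_mem hdi)).2⟩
        have hde : d < e := by omega
        have h5' := h5 hde
        rw [List.getD_eq_getElem l 0 (by omega)] at h5'
        exact lt_of_lt_of_le h5' (sorted_getElem_le hpw (by omega) hdi)
    · rintro ⟨⟨p, q⟩, hmem, rfl⟩
      simp only [Set.mem_prod, Set.mem_setOf_eq] at hmem
      obtain ⟨⟨hp1, hp2, hp3⟩, hq1, hq2, hq3⟩ := hmem
      show p ++ q ∈ A d
      have hpp := List.isChain_iff_pairwise.1 hp2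
      have hpel : ∀ x ∈ p, 1 ≤ x ∧ x ≤ I.getD d 0 := by
        intro x hx
        rcases List.mem_iff_getElem.1 hx with ⟨t, ht, rfl⟩
        have htd : t < d := hp1 ▸ ht
        have h3 := hp3 t htd
        rw [List.getD_eq_getElem p 0 ht] at h3
        have hIt : I.getD t 0 ≤ I.getD d 0 := by
          rw [List.getD_eq_getElem I 0 (by omega), has]
          exact sorted_getElem_le hIp (le_of_lt htd) hds
        exact ⟨h3.1, h3.2.trans hIt⟩
      refine (hAmem _ _).2 ⟨by simp only [List.length_append, hp1, hq1]; omega, ?_, ?_, ?_, ?_⟩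
      · rw [show List.Chain' _ (p ++ q) ↔ _ from List.isChain_iff_pairwise, List.pairwise_append]
        exact ⟨hpp, List.isChain_iff_pairwise.1 hq2,
          fun x hx y hy => (hpel x hx).2.trans (le_of_lt (hq3 y hy).1)⟩
      · intro x hx
        rcases List.mem_append.1 hx with hx | hx
        · exact ⟨(hpel x hx).1, (hpel x hx).2.trans ha1.2⟩
        · exact ⟨by have := (hq3 x hx).1; omega, (hq3 x hx).2⟩
      · intro j hj
        rw [List.getD_append _ _ _ j (hp1 ▸ hj)]
        exact (hp3 j hj).2
      · intro hde
        have hq0 : 0 < q.length := by omega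
        have hlen : d < (p ++ q).length := by simp only [List.length_append, hp1, hq1]; omega
        rw [List.getD_eq_getElem _ 0 hlen, List.getElem_append]
        rw [dif_neg (by omega)]
        have hidx : d - p.length = 0 := by omega
        simp only [hidx]
        exact (hq3 _ (List.getElem_mem hq0)).1
  rw [himg, Set.ncard_image_of_injOn ?inj, ncard_prod',
    ncard_sorted_interval (e - d) (I.getD d 0) n ha1.2]
  case inj =>
    rintro ⟨p, q⟩ ⟨hp, hq⟩ ⟨p', q'⟩ ⟨hp', hq'⟩ happ
    obtain ⟨rfl, rfl⟩ := List.append_inj happ (hp.1.trans hp'.1.symm)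
    rfl
  rw [show Set.ncard {l : List ℕ | l.length = d ∧ l.Chain' (· ≤ ·) ∧
      ∀ t < d, 1 ≤ l.getD t 0 ∧ l.getD t 0 ≤ I.getD t 0} = c I d from rfl]
  congr 1
  by_cases han : I.getD d 0 = n
  · rw [if_pos han, han, Nat.sub_self]
    rcases Nat.eq_or_lt_of_le hdele with rfl | hlt
    · simp [Nat.multichoose_zero_right]
    · have : e - d = (e - d - 1) + 1 := by omega
      rw [this, Nat.multichoose_zero_succ, if_neg (by omega)]
  · rw [if_neg han]
    have hm : 1 ≤ n - I.getD d 0 := by omega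
    rw [Nat.multichoose_eq]
    have harith : n - I.getD d 0 + (e - d) - 1 = e - d + (n - I.getD d 0) - 1 := by omega
    rw [harith, ← Nat.choose_symm (show e - d ≤ e - d + (n - I.getD d 0) - 1 by omega)]
    congr 1
    omega
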